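/- Let γ > 0 with γ ≠ 1, and let j⁻, j⁺ ≥ 0 and k ≥ 0 be real numbers satisfying |j⁺ − j⁻| ≤ k ≤ j⁺ + j⁻. Then the master-constraint eigenvalue M = (1 − 1/γ²)k² + (2/γ)(1/γ − 1)(j⁺)² + (2/γ)(1/γ + 1)(j⁻)² vanishes if and only if k = 2j⁻/|1 − γ| = 2j⁺/(1 + γ). -/

import Mathlib

set_option maxHeartbeats 1600000 in
/-- The master-constraint eigenvalue
M = (1 − 1/γ²)k² + (2/γ)(1/γ − 1)(j⁺)² + (2/γ)(1/γ + 1)(j⁻)²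
vanishes iff k = 2j⁻/|1−γ| = 2j⁺/(1+γ), for γ > 0, γ ≠ 1, and
j⁻, j⁺, k ≥ 0 satisfying the Clebsch–Gordan condition |j⁺ − j⁻| ≤ k ≤ j⁺ + j⁻. -/
theorem master_constraint_solutions
    (γ jm jp k : ℝ) (hγ : 0 < γ) (hγ1 : γ ≠ 1)
    (hjm : 0 ≤ jm) (hjp : 0 ≤ jp) (hk : 0 ≤ k)
    (htri₁ : |jp - jm| ≤ k) (htri₂ : k ≤ jp + jm) :
    (1 - 1/γ^2) * k^2 + (2/γ) * (1/γ - 1) * jp^2 + (2/γ) * (1/γ + 1) * jm^2 = 0 ↔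
      (k = 2 * jm / |1 - γ| ∧ k = 2 * jp / (1 + γ)) := by
  have hγ0 : γ ≠ 0 := ne_of_gt hγ
  have hγp1 : (0:ℝ) < 1 + γ := by linarith
  constructor
  · intro hM
    have E : (γ^2-1)*k^2 + 2*(1-γ)*jp^2 + 2*(1+γ)*jm^2 = 0 := by
      have h4 : γ^4 ≠ 0 := pow_ne_zero _ hγ0
      apply mul_left_cancel₀ h4
      rw [mul_zero]
      field_simp at hM
      linear_combination γ^4 * hM
    rcases lt_or_gt_of_ne hγ1 with h | h
    · -- γ < 1
      have habs : |1 - γ| = 1 - γ := abs_of_pos (by linarith)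
      have hid : (1-γ^2)*((jp+jm)^2 - k^2) + ((1-γ)*jp - (1+γ)*jm)^2 = 0 := by
        linear_combination E
      have hne : (0:ℝ) < 1 - γ^2 := by nlinarith
      have hsqle : k^2 ≤ (jp+jm)^2 := by nlinarith
      have h1 : (0:ℝ) ≤ (1-γ^2)*((jp+jm)^2 - k^2) :=
        mul_nonneg hne.le (by linarith)
      have h2 : (0:ℝ) ≤ ((1-γ)*jp - (1+γ)*jm)^2 := sq_nonneg _
      have hz2 : ((1-γ)*jp - (1+γ)*jm)^2 = 0 := by linarith
      have hz1 : (jp+jm)^2 - k^2 = 0 := by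
        have := mul_eq_zero.mp (by linarith : (1-γ^2)*((jp+jm)^2 - k^2) = 0)
        rcases this with h' | h'
        · exact absurd h' (ne_of_gt hne)
        · exact h'
      have heq : (1-γ)*jp - (1+γ)*jm = 0 := sq_eq_zero_iff.mp hz2
      have hk' : k = jp + jm := by nlinarith
      rw [habs]
      refine ⟨?_, ?_⟩
      · rw [eq_div_iff (by linarith : (1:ℝ)-γ ≠ 0)]
        linear_combination heq + (1-γ)*hk'
      · rw [eq_div_iff (ne_of_gt hγp1)]
        linear_combination -heq + (1+γ)*hk'
    · -- γ > 1
      have habs : |1 - γ| = γ - 1 := by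
        rw [abs_of_neg (by linarith)]; ring
      have hid : (γ^2-1)*(k^2 - (jp-jm)^2) + ((γ-1)*jp - (γ+1)*jm)^2 = 0 := by
        linear_combination E
      have hne : (0:ℝ) < γ^2 - 1 := by nlinarith
      have hsqle : (jp-jm)^2 ≤ k^2 := by
        rw [← sq_abs]
        exact pow_le_pow_left₀ (abs_nonneg _) htri₁ 2
      have h1 : (0:ℝ) ≤ (γ^2-1)*(k^2 - (jp-jm)^2) :=
        mul_nonneg hne.le (by linarith)
      have h2 : (0:ℝ) ≤ ((γ-1)*jp - (γ+1)*jm)^2 := sq_nonneg _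
      have hz2 : ((γ-1)*jp - (γ+1)*jm)^2 = 0 := by linarith
      have hz1 : k^2 - (jp-jm)^2 = 0 := by
        have := mul_eq_zero.mp (by linarith : (γ^2-1)*(k^2 - (jp-jm)^2) = 0)
        rcases this with h' | h'
        · exact absurd h' (ne_of_gt hne)
        · exact h'
      have heq : (γ-1)*jp - (γ+1)*jm = 0 := sq_eq_zero_iff.mp hz2
      have hjpjm : jm ≤ jp := by nlinarith
      have hk' : k = jp - jm := by nlinarith
      rw [habs]
      refine ⟨?_, ?_⟩
      · rw [eq_div_iff (by linarith : γ-(1:ℝ) ≠ 0)]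
        linear_combination heq + (γ-1)*hk'
      · rw [eq_div_iff (ne_of_gt hγp1)]
        linear_combination heq + (1+γ)*hk'
  · rintro ⟨h1, h2⟩
    have hjp' : jp = k * (1+γ) / 2 := by
      rw [eq_div_iff (ne_of_gt hγp1)] at h2
      linarith
    rcases lt_or_gt_of_ne hγ1 with h | h
    · have habs : |1 - γ| = 1 - γ := abs_of_pos (by linarith)
      rw [habs, eq_div_iff (by linarith : (1:ℝ)-γ ≠ 0)] at h1
      have hjm' : jm = k * (1-γ) / 2 := by linarith
      rw [hjm', hjp']
      field_simp
      ring
    · have habs : |1 - γ| = γ - 1 := by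
        rw [abs_of_neg (by linarith)]; ring
      rw [habs, eq_div_iff (by linarith : γ-(1:ℝ) ≠ 0)] at h1
      have hjm' : jm = k * (γ-1) / 2 := by linarith
      rw [hjm', hjp']
      field_simp
      ring
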